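/- Let φ : ℂ[Y₁₁, Y₁₂, Y₂₁, Y₂₂] → ℂ[Z₁, Z₂, W₁, W₂] be the ℂ-algebra homomorphism determined by φ(Y_{ij}) = Z_i·W_j for i, j ∈ {1,2}. Then ℂ[Z₁, Z₂, W₁, W₂], regarded as a module over ℂ[Y₁₁, Y₁₂, Y₂₁, Y₂₂] via φ, is not finitely generated; i.e., φ is not a finite ring homomorphism. (This is the claim made in §4 of the paper: the Cox ring of ℙ¹×ℙ¹ is not a finite module over the Cox ring of ℙ³ under the homomorphism induced by the Segre embedding.) -/

import Mathlib

open MvPolynomial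

/-- §4: the `ℂ`-algebra homomorphism
`ℂ[Y₁₁, Y₁₂, Y₂₁, Y₂₂] → ℂ[Z₁, Z₂, W₁, W₂]`, `Y_{ij} ↦ Z_i · W_j` (the homomorphism of
Cox rings induced by the Segre embedding `ℙ¹ × ℙ¹ ↪ ℙ³`) is not a finite ring
homomorphism: the target is not finitely generated as a module over the source. -/
theorem stmt14 :
    ¬ RingHom.Finite
      (MvPolynomial.aeval (R := ℂ)
        (fun p : Fin 2 × Fin 2 =>
          (X (Sum.inl p.1) * X (Sum.inr p.2) :
            MvPolynomial (Fin 2 ⊕ Fin 2) ℂ))).toRingHom := by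
  intro h
  set φ := (MvPolynomial.aeval (R := ℂ)
      (fun p : Fin 2 × Fin 2 =>
        (X (Sum.inl p.1) * X (Sum.inr p.2) :
          MvPolynomial (Fin 2 ⊕ Fin 2) ℂ))).toRingHom with hφ
  have hint := h.to_isIntegral
  obtain ⟨p, hmonic, heval⟩ := hint (X (Sum.inl 0))
  -- specialize Z₁ ↦ X, everything else ↦ 0
  set σ : Fin 2 ⊕ Fin 2 → Polynomial ℂ := fun s =>
    match s with
    | Sum.inl ⟨0, _⟩ => Polynomial.X
    | _ => 0 with hσ
  set ψ : MvPolynomial (Fin 2 ⊕ Fin 2) ℂ →+* Polynomial ℂ :=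
    (MvPolynomial.aeval (R := ℂ) σ).toRingHom with hψ
  have hcomp : ψ.comp φ =
      (Polynomial.C (R := ℂ)).comp (MvPolynomial.constantCoeff) := by
    apply MvPolynomial.ringHom_ext
    · intro c
      simp [hψ, hφ]
    · intro s
      have : σ (Sum.inr s.2) = 0 := by
        simp [hσ]
      simp [hψ, hφ, this]
  have key : Polynomial.eval₂ (ψ.comp φ) (ψ (X (Sum.inl 0))) p = 0 := by
    rw [← Polynomial.hom_eval₂, heval, map_zero]
  rw [hcomp] at key
  have hx : ψ (X (Sum.inl 0)) = Polynomial.X := by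
    simp [hψ, hσ]
    rfl
  rw [hx] at key
  have : p.map (MvPolynomial.constantCoeff (σ := Fin 2 × Fin 2) (R := ℂ)) = 0 := by
    rw [Polynomial.map]; exact key
  exact (hmonic.map _).ne_zero this
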